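/- Let p be a prime, n ≥ 1 an integer, Λ a commutative ℚ-algebra, A an associative unital Λ-algebra, and X ∈ A a nilpotent element with X^{p^n} = 0. For a truncated Witt vector t ∈ W_n(Λ) (Witt vectors of length n for the prime p) with coefficients t_0, …, t_{n−1} ∈ Λ, define E_X(t) = ∏_{m=0}^{n−1} F(t_m · X^{p^m}), where F is the Artin–Hasse exponential evaluated at a nilpotent element. Then for all t, s ∈ W_n(Λ): E_X(t + s) = E_X(t) · E_X(s), where t + s denotes addition of truncated Witt vectors. In particular each E_X(t) is invertible in A, and E_X defines a group homomorphism from the additive group of W_n(Λ) to the unit group of A. -/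

import Mathlib

/-- The exponential `exp(a) = ∑_{k ≥ 0} a^k / k!` of a nilpotent element `a` of a
`ℚ`-algebra, truncated at `N`; when `a ^ N = 0` the omitted terms vanish, so this is the
full (finite) exponential sum. -/
noncomputable def expNil {A : Type*} [Ring A] [Algebra ℚ A] (N : ℕ) (a : A) : A :=
  ∑ k ∈ Finset.range N, (k.factorial : ℚ)⁻¹ • a ^ k

/-- The Artin–Hasse exponential `F(a) = exp(∑_{i ≥ 0} a^(p^i) / p^i)` of a nilpotent
element `a` with `a ^ (p ^ n) = 0` (the omitted terms of both sums vanish). -/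
noncomputable def artinHasseNil {A : Type*} [Ring A] [Algebra ℚ A] (p n : ℕ) (a : A) : A :=
  expNil (p ^ n) (∑ i ∈ Finset.range n, ((p : ℚ) ^ i)⁻¹ • a ^ p ^ i)

/-- `E_X(t) = ∏_{m=0}^{n-1} F(t_m · X^(p^m))` for a truncated Witt vector
`t ∈ W_n(Λ)` with coefficients `t_0, …, t_{n-1}` and a nilpotent `X` with `X^(p^n) = 0`;
the product is taken in the order `m = 0, 1, …, n-1`. -/
noncomputable def wittArtinHasseExp (p n : ℕ) [Fact p.Prime]
    {Λ : Type*} [CommRing Λ] [Algebra ℚ Λ]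
    {A : Type*} [Ring A] [Algebra ℚ A] [Algebra Λ A]
    (X : A) (t : TruncatedWittVector p n Λ) : A :=
  ((List.finRange n).map fun m =>
    artinHasseNil p n (algebraMap Λ A (t.coeff m) * X ^ p ^ (m : ℕ))).prod


open Finset

lemma expNil_zero {A : Type*} [Ring A] [Algebra ℚ A] {N : ℕ} (hN : 0 < N) :
    expNil N (0 : A) = 1 := by
  rw [expNil]
  rw [Finset.sum_eq_single 0]
  · simp
  · intro k hk hk0
    simp [zero_pow hk0]
  · intro h; exact absurd (Finset.mem_range.2 hN) h

lemma fact_inv_choose {m j : ℕ} (h : j ≤ m) :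
    ((m.factorial : ℚ))⁻¹ * (m.choose j : ℚ) = ((j.factorial : ℚ))⁻¹ * (((m - j).factorial : ℚ))⁻¹ := by
  have key : (m.choose j : ℚ) * (j.factorial : ℚ) * ((m - j).factorial : ℚ) = (m.factorial : ℚ) := by
    exact_mod_cast congrArg (Nat.cast : ℕ → ℚ) (Nat.choose_mul_factorial_mul_factorial h)
  have h1 : (m.factorial : ℚ) ≠ 0 := Nat.cast_ne_zero.2 m.factorial_ne_zero
  have h2 : (j.factorial : ℚ) ≠ 0 := Nat.cast_ne_zero.2 j.factorial_ne_zero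
  have h3 : (((m - j).factorial : ℚ)) ≠ 0 := Nat.cast_ne_zero.2 (m - j).factorial_ne_zero
  field_simp
  linarith [key]

lemma expNil_add {B : Type*} [CommRing B] [Algebra ℚ B] {N : ℕ} {a b : B}
    (h : ∀ j k, N ≤ j + k → a ^ j * b ^ k = 0) :
    expNil N (a + b) = expNil N a * expNil N b := by
  set G : ℕ → ℕ → B := fun j k => ((j.factorial : ℚ))⁻¹ • (((k.factorial : ℚ))⁻¹ • (a ^ j * b ^ k)) with hG
  have hGzero : ∀ j k, N ≤ j + k → G j k = 0 := by
    intro j k hjk; simp [hG, h j k hjk]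
  have lhs : expNil N (a + b) = ∑ m ∈ range N, ∑ j ∈ range (m + 1), G j (m - j) := by
    rw [expNil]
    refine Finset.sum_congr rfl fun m _ => ?_
    rw [add_pow, Finset.smul_sum]
    refine Finset.sum_congr rfl fun j hj => ?_
    have hj' : j ≤ m := Nat.lt_succ_iff.mp (Finset.mem_range.mp hj)
    rw [hG]
    have hc : a ^ j * b ^ (m - j) * (m.choose j : B) = (m.choose j : ℚ) • (a ^ j * b ^ (m - j)) := by
      rw [mul_comm, ← nsmul_eq_mul, ← Nat.cast_smul_eq_nsmul ℚ]
    rw [hc, smul_smul, fact_inv_choose hj', mul_smul]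
  have rhs : expNil N a * expNil N b = ∑ j ∈ range N, ∑ k ∈ range N, G j k := by
    rw [expNil, expNil, Finset.sum_mul_sum]
    refine Finset.sum_congr rfl fun j _ => Finset.sum_congr rfl fun k _ => ?_
    rw [hG, smul_mul_assoc, mul_smul_comm]
  rw [lhs, rhs]
  have step1 : ∑ m ∈ range N, ∑ j ∈ range (m + 1), G j (m - j)
      = ∑ j ∈ range N, ∑ m ∈ Finset.Ico j N, G j (m - j) := by
    simp only [Finset.range_eq_Ico]
    rw [← Finset.sum_Ico_Ico_comm 0 N (fun j m => G j (m - j))]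
  rw [step1]
  refine Finset.sum_congr rfl fun j hj => ?_
  rw [Finset.sum_Ico_eq_sum_range]
  simp only [Nat.add_sub_cancel_left]
  refine Finset.sum_subset (by intro i hi; rw [Finset.mem_range] at *; omega) ?_
  intro k hk hk'
  refine hGzero j k ?_
  rw [Finset.mem_range] at *
  omega

lemma dvd_qsmul {B : Type*} [CommRing B] [Algebra ℚ B] (q : ℚ) {x y : B} (h : x ∣ y) :
    x ∣ q • y := by
  obtain ⟨u, rfl⟩ := h
  exact ⟨q • u, (mul_smul_comm q x u).symm⟩

lemma expNil_mul_of_dvd {B : Type*} [CommRing B] [Algebra ℚ B] {N : ℕ} {x a b : B}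
    (hx : x ^ N = 0) (ha : x ∣ a) (hb : x ∣ b) :
    expNil N (a + b) = expNil N a * expNil N b := by
  obtain ⟨u, rfl⟩ := ha
  obtain ⟨v, rfl⟩ := hb
  apply expNil_add
  intro j k hjk
  have h1 : (x * u) ^ j * (x * v) ^ k = x ^ (j + k) * (u ^ j * v ^ k) := by ring
  have h2 : x ^ (j + k) = 0 := by
    rw [← Nat.sub_add_cancel hjk, pow_add, hx, mul_zero]
  rw [h1, h2, zero_mul]

lemma expNil_list_prod {B : Type*} [CommRing B] [Algebra ℚ B] {N : ℕ} {x : B}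
    (hN : 0 < N) (hx : x ^ N = 0) :
    ∀ l : List B, (∀ a ∈ l, x ∣ a) → (l.map (expNil N)).prod = expNil N l.sum := by
  intro l
  induction l with
  | nil => intro _; simp [expNil_zero hN]
  | cons a l ih =>
    intro h
    have ha : x ∣ a := h a List.mem_cons_self
    have hl : ∀ b ∈ l, x ∣ b := fun b hb => h b (List.mem_cons_of_mem a hb)
    have hs : x ∣ l.sum := List.dvd_sum hl
    rw [List.map_cons, List.prod_cons, ih hl, List.sum_cons, expNil_mul_of_dvd hx ha hs]


lemma artinHasseNil_mul_pow {B : Type*} [CommRing B] [Algebra ℚ B] (p n m : ℕ) (c x : B) :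
    artinHasseNil p n (c * x ^ p ^ m)
      = expNil (p ^ n) (∑ i ∈ Finset.range n, ((p : ℚ) ^ i)⁻¹ • (c ^ p ^ i * x ^ p ^ (m + i))) := by
  rw [artinHasseNil]
  congr 1
  refine Finset.sum_congr rfl fun i _ => ?_
  congr 1
  rw [mul_pow, ← pow_mul, ← pow_add]

lemma map_expNil {B A : Type*} [Ring B] [Algebra ℚ B] [Ring A] [Algebra ℚ A]
    (f : B →ₐ[ℚ] A) (N : ℕ) (a : B) : f (expNil N a) = expNil N (f a) := by
  simp [expNil, map_sum, map_smul, map_pow]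

lemma map_artinHasseNil {B A : Type*} [Ring B] [Algebra ℚ B] [Ring A] [Algebra ℚ A]
    (f : B →ₐ[ℚ] A) (p n : ℕ) (a : B) : f (artinHasseNil p n a) = artinHasseNil p n (f a) := by
  simp [artinHasseNil, map_expNil, map_sum, map_smul, map_pow]

/-- ghost components of a truncated Witt vector -/
noncomputable def gh (p n : ℕ) [hp : Fact p.Prime] {Λ : Type*} [CommRing Λ] (k : ℕ)
    (t : TruncatedWittVector p n Λ) : Λ :=
  WittVector.ghostComponent k t.out

lemma gh_eq_sum (p n : ℕ) [hp : Fact p.Prime] {Λ : Type*} [CommRing Λ] (k : ℕ)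
    (t : TruncatedWittVector p n Λ) :
    gh p n k t = ∑ i ∈ Finset.range (k + 1), (p : Λ) ^ i * t.out.coeff i ^ p ^ (k - i) := by
  rw [gh, WittVector.ghostComponent_apply, aeval_wittPolynomial]

lemma gh_add (p n : ℕ) [hp : Fact p.Prime] {Λ : Type*} [CommRing Λ] (k : ℕ) (hk : k < n)
    (t s : TruncatedWittVector p n Λ) :
    gh p n k (t + s) = gh p n k t + gh p n k s := by
  have h1 : gh p n k (t + s) = WittVector.ghostComponent k (t.out + s.out) := by
    rw [gh, WittVector.ghostComponent_apply, WittVector.ghostComponent_apply,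
      aeval_wittPolynomial, aeval_wittPolynomial]
    refine Finset.sum_congr rfl fun i hi => ?_
    have hin : i < n := lt_of_le_of_lt (Nat.lt_succ_iff.mp (Finset.mem_range.mp hi)) hk
    have e1 : t + s = WittVector.truncateFun n (t.out + s.out) := rfl
    have e2 : (t + s).out.coeff i = (t.out + s.out).coeff i := by
      have := TruncatedWittVector.coeff_out (t + s) ⟨i, hin⟩
      rw [this, e1, WittVector.coeff_truncateFun]
    rw [e2]
  rw [h1, map_add, gh, gh]

lemma key_lemma {B : Type*} [CommRing B] [Algebra ℚ B] (p n : ℕ) [hp : Fact p.Prime]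
    {Λ : Type*} [CommRing Λ] [Algebra ℚ Λ] (ρ : Λ →+* B) (x : B) (hx : x ^ p ^ n = 0)
    (t : TruncatedWittVector p n Λ) :
    ((List.finRange n).map fun m =>
        artinHasseNil p n (ρ (t.coeff m) * x ^ p ^ (m : ℕ))).prod
      = expNil (p ^ n) (∑ k ∈ Finset.range n, ((p : ℚ) ^ k)⁻¹ • (ρ (gh p n k t) * x ^ p ^ k)) := by
  have hppos : 0 < p := hp.out.pos
  have hN : 0 < p ^ n := pow_pos hppos n  -- maybe pow_pos
  have hp0 : (p : ℚ) ≠ 0 := Nat.cast_ne_zero.2 hppos.ne'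
  have hxle : ∀ e : ℕ, n ≤ e → x ^ p ^ e = 0 := by
    intro e he
    have h1 : p ^ n ≤ p ^ e := Nat.pow_le_pow_right hppos he
    rw [← Nat.sub_add_cancel h1, pow_add, hx, mul_zero]
  set c : ℕ → B := fun m => ρ (t.out.coeff m) with hc
  set S : ℕ → B := fun m => ∑ i ∈ Finset.range n, ((p : ℚ) ^ i)⁻¹ • (c m ^ p ^ i * x ^ p ^ (m + i))
    with hS
  -- step A: each factor is expNil (p^n) (S m)
  have stepA : ((List.finRange n).map fun m =>
      artinHasseNil p n (ρ (t.coeff m) * x ^ p ^ (m : ℕ))).prod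
      = (((List.finRange n).map fun m : Fin n => S (m : ℕ)).map (expNil (p ^ n))).prod := by
    rw [List.map_map]
    congr 1
    refine List.map_congr_left fun m _ => ?_
    have : ρ (t.coeff m) = c (m : ℕ) := by rw [hc]; simp [TruncatedWittVector.coeff_out]
    rw [this, Function.comp_apply, artinHasseNil_mul_pow]
  rw [stepA]
  -- step B: product of exps is exp of sum
  have hdvd : ∀ m : ℕ, x ∣ S m := by
    intro m
    refine Finset.dvd_sum fun i _ => dvd_qsmul _ (Dvd.dvd.mul_left ?_ _)
    exact dvd_pow_self x (pow_pos hppos _).ne'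
  rw [expNil_list_prod hN hx _ (by
    intro a ha
    simp only [List.mem_map] at ha
    obtain ⟨m, _, rfl⟩ := ha
    exact hdvd m)]
  congr 1
  -- step C: the sums agree
  rw [← Fin.sum_univ_def, Fin.sum_univ_eq_sum_range]
  -- now a pure ℕ-indexed identity
  set F : ℕ → ℕ → B := fun m k =>
    ((p : ℚ) ^ (k - m))⁻¹ • (c m ^ p ^ (k - m) * x ^ p ^ (m + (k - m))) with hF
  have stepC1 : ∀ m ∈ Finset.range n, S m = ∑ k ∈ Finset.Ico m n, F m k := by
    intro m hm
    rw [hS, Finset.sum_Ico_eq_sum_range]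
    simp only [Nat.add_sub_cancel_left, hF]
    refine (Finset.sum_subset (fun i hi => by
      rw [Finset.mem_range] at *; omega) fun i hi hi' => ?_).symm
    have : n ≤ m + i := by rw [Finset.mem_range] at *; omega
    rw [hxle _ this, mul_zero, smul_zero]
  rw [Finset.sum_congr rfl stepC1]
  have swap : ∑ m ∈ Finset.range n, ∑ k ∈ Finset.Ico m n, F m k
      = ∑ k ∈ Finset.range n, ∑ m ∈ Finset.range (k + 1), F m k := by
    simp only [Finset.range_eq_Ico]
    exact Finset.sum_Ico_Ico_comm 0 n F
  rw [swap]
  refine Finset.sum_congr rfl fun k hk => ?_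
  -- inner: ∑_{m ≤ k} F m k = (p^k)⁻¹ • (ρ (gh k t) * x^(p^k))
  rw [gh_eq_sum, map_sum, Finset.sum_mul, Finset.smul_sum]
  refine Finset.sum_congr rfl fun m hm => ?_
  have hmk : m ≤ k := Nat.lt_succ_iff.mp (Finset.mem_range.mp hm)
  have e1 : m + (k - m) = k := Nat.add_sub_cancel' hmk
  have e2 : ρ ((p : Λ) ^ m * t.out.coeff m ^ p ^ (k - m)) = ((p ^ m : ℕ) : B) * c m ^ p ^ (k - m) := by
    rw [map_mul, map_pow, map_pow, map_natCast]
    push_cast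
    rfl
  have e0 : F m k = ((p : ℚ) ^ (k - m))⁻¹ • (c m ^ p ^ (k - m) * x ^ p ^ k) := by
    rw [hF]; dsimp only; rw [e1]
  rw [e0, e2]
  have e3 : ((p ^ m : ℕ) : B) * c m ^ p ^ (k - m) * x ^ p ^ k
      = ((p ^ m : ℕ) : ℚ) • (c m ^ p ^ (k - m) * x ^ p ^ k) := by
    rw [mul_assoc, ← nsmul_eq_mul, ← Nat.cast_smul_eq_nsmul ℚ]
  rw [e3, smul_smul]
  congr 1
  push_cast
  have hpm : (p : ℚ) ^ m ≠ 0 := pow_ne_zero _ hp0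
  have hpk : (p : ℚ) ^ m * (p : ℚ) ^ (k - m) = (p : ℚ) ^ k := by
    rw [← pow_add, Nat.add_sub_cancel' hmk]
  rw [← hpk]
  field_simp


/-- for a prime `p`, `n ≥ 1`, a commutative `ℚ`-algebra `Λ`, an associative
unital `Λ`-algebra `A`, and a nilpotent `X ∈ A` with `X^(p^n) = 0`, the Artin–Hasse map
`E_X : W_n(Λ) → A` satisfies `E_X(t + s) = E_X(t) · E_X(s)` for all truncated Witt
vectors `t, s ∈ W_n(Λ)`.  In particular each `E_X(t)` is invertible in `A`, so `E_X`
defines a group homomorphism from the additive group `W_n(Λ)` to the unit group of `A`. -/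
theorem stmt6 (p : ℕ) [Fact p.Prime] (n : ℕ) (hn : 1 ≤ n)
    (Λ : Type*) [CommRing Λ] [Algebra ℚ Λ]
    (A : Type*) [Ring A] [Algebra ℚ A] [Algebra Λ A] [IsScalarTower ℚ Λ A]
    (X : A) (hX : X ^ p ^ n = 0) :
    (∀ t s : TruncatedWittVector p n Λ,
        wittArtinHasseExp p n X (t + s) = wittArtinHasseExp p n X t * wittArtinHasseExp p n X s)
      ∧ (∀ t : TruncatedWittVector p n Λ, IsUnit (wittArtinHasseExp p n X t))
      ∧ ∃ φ : Multiplicative (TruncatedWittVector p n Λ) →* Aˣ,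
          ∀ t : TruncatedWittVector p n Λ,
            ((φ (Multiplicative.ofAdd t) : Aˣ) : A) = wittArtinHasseExp p n X t := by
  classical
  have hppos : 0 < p := (Fact.out : p.Prime).pos
  have hN : 0 < p ^ n := pow_pos hppos n
  set S : Set A := Set.range (algebraMap Λ A) ∪ {X} with hSdef
  have hcomm : ∀ a ∈ S, ∀ b ∈ S, a * b = b * a := by
    intro a ha b hb
    rcases ha with ⟨la, hla⟩ | hXa
    · rw [← hla]; exact Algebra.commutes la b
    · rw [Set.mem_singleton_iff] at hXa
      rcases hb with ⟨lb, hlb⟩ | hXb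
      · rw [← hlb]; exact (Algebra.commutes lb a).symm
      · rw [Set.mem_singleton_iff] at hXb; rw [hXa, hXb]
  letI : CommRing (Algebra.adjoin ℚ S) := Algebra.adjoinCommRingOfComm ℚ hcomm
  let xB : Algebra.adjoin ℚ S := ⟨X, Algebra.subset_adjoin (Or.inr rfl)⟩
  let ρ : Λ →+* Algebra.adjoin ℚ S :=
    { toFun := fun l => ⟨algebraMap Λ A l, Algebra.subset_adjoin (Or.inl ⟨l, rfl⟩)⟩
      map_one' := Subtype.ext (map_one _)
      map_mul' := fun a b => Subtype.ext (map_mul _ a b)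
      map_zero' := Subtype.ext (map_zero _)
      map_add' := fun a b => Subtype.ext (map_add _ a b) }
  let f : Algebra.adjoin ℚ S →ₐ[ℚ] A := Subalgebra.val _
  have hxB : xB ^ p ^ n = 0 := Subtype.ext (by simpa using hX)
  set T : TruncatedWittVector p n Λ → Algebra.adjoin ℚ S := fun t =>
    ∑ k ∈ Finset.range n, ((p : ℚ) ^ k)⁻¹ • (ρ (gh p n k t) * xB ^ p ^ k) with hT
  have hE : ∀ t, wittArtinHasseExp p n X t = f (expNil (p ^ n) (T t)) := by
    intro t
    rw [hT, ← key_lemma p n ρ xB hxB t, wittArtinHasseExp, map_list_prod, List.map_map]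
    congr 1
    refine List.map_congr_left fun m _ => ?_
    rw [Function.comp_apply, map_artinHasseNil]
    rfl
  have Tadd : ∀ t s, T (t + s) = T t + T s := by
    intro t s
    rw [hT, ← Finset.sum_add_distrib]
    refine Finset.sum_congr rfl fun k hk => ?_
    rw [gh_add p n k (Finset.mem_range.mp hk), map_add, add_mul, smul_add]
  have hdvdT : ∀ t, xB ∣ T t := by
    intro t
    exact Finset.dvd_sum fun k _ => dvd_qsmul _
      (Dvd.dvd.mul_left (dvd_pow_self xB (pow_pos hppos k).ne') _)
  have hmul : ∀ t s : TruncatedWittVector p n Λ, wittArtinHasseExp p n X (t + s)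
      = wittArtinHasseExp p n X t * wittArtinHasseExp p n X s := by
    intro t s
    rw [hE, hE, hE, Tadd, expNil_mul_of_dvd hxB (hdvdT t) (hdvdT s), map_mul]
  have hzero : wittArtinHasseExp p n X (0 : TruncatedWittVector p n Λ) = 1 := by
    rw [hE 0]
    have hT0 : T 0 = 0 := by
      rw [hT]
      refine Finset.sum_eq_zero fun k hk => ?_
      have h0 : gh p n k (0 : TruncatedWittVector p n Λ) = 0 := by
        have h := gh_add p n k (Finset.mem_range.mp hk) (0 : TruncatedWittVector p n Λ) 0
        rw [add_zero] at h
        exact (left_eq_add.mp h)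
      rw [h0, map_zero, zero_mul, smul_zero]
    rw [hT0, expNil_zero hN, map_one]
  have h1 : ∀ t : TruncatedWittVector p n Λ, wittArtinHasseExp p n X t * wittArtinHasseExp p n X (-t) = 1 := by
    intro t; rw [← hmul, add_neg_cancel, hzero]
  have h2 : ∀ t : TruncatedWittVector p n Λ, wittArtinHasseExp p n X (-t) * wittArtinHasseExp p n X t = 1 := by
    intro t; rw [← hmul, neg_add_cancel, hzero]
  refine ⟨hmul, fun t => ⟨⟨_, _, h1 t, h2 t⟩, rfl⟩, ?_⟩
  refine ⟨MonoidHom.mk' (fun g => ⟨wittArtinHasseExp p n X g.toAdd,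
      wittArtinHasseExp p n X (-g.toAdd), h1 _, h2 _⟩) (fun a b => Units.ext (hmul _ _)), ?_⟩
  intro t
  rfl
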